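/- Let n ≥ 1 be an integer, let C₀ > 0 and c ≥ √(2(n+2)) be real numbers, and let V : ℝ → ℝ be a nondecreasing function with V(r) > 0 for all r ≥ c and V(r) → ∞ as r → ∞. Assume: (a) for every real t ≥ √(2(n+2)), V(t+1)/(t+1)^n − V(t)/t^n ≤ 2n·V(t+1)/(t+1)^(n+2); and (b) for every real t ≥ c with 0 < V(t+2) − V(t−1) < 1, one has (V(t+1) − V(t))·log(1/(V(t+2) − V(t−1))) ≤ C₀·(V(t+2) − V(t−1)). Then there exists a constant C > 0 such that V(r) ≥ C·r for all r ≥ c. -/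

import Mathlib

set_option maxHeartbeats 1000000

-- step lemma: from hypothesis (a), V(t+1)*t ≤ V(t)*(t+3n) for t large
lemma aux_step (n : ℕ) (c : ℝ) (hν1 : (1:ℝ) ≤ (n:ℝ))
    (hc : Real.sqrt (2 * ((n : ℝ) + 2)) ≤ c)
    (V : ℝ → ℝ) (hVpos : ∀ r ≥ c, 0 < V r)
    (ha : ∀ t ≥ Real.sqrt (2 * ((n : ℝ) + 2)),
      V (t + 1) / (t + 1) ^ n - V t / t ^ n ≤ 2 * n * V (t + 1) / (t + 1) ^ (n + 2))
    (t : ℝ) (hct : c ≤ t) (h8 : 8 * ((n:ℝ) + 1) ^ 2 ≤ t) :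
    V (t + 1) * t ≤ V t * (t + 3 * (n:ℝ)) := by
  set ν : ℝ := (n:ℝ) with hνdef
  have hν0 : (0:ℝ) < ν := by linarith
  have ht16 : 16 * ν ≤ t := by nlinarith
  have ht8 : (8:ℝ) ≤ t := by nlinarith
  have ht0 : (0:ℝ) < t := by linarith
  have ha0 : 0 < V t := hVpos t hct
  have hb0 : 0 < V (t + 1) := hVpos _ (by linarith)
  have hQ : (0:ℝ) < (t + 1) ^ n := by positivity
  have hP : (0:ℝ) < t ^ n := by positivity
  have hA := ha t (le_trans hc hct)
  rw [pow_add] at hA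
  rw [div_sub_div _ _ (ne_of_gt hQ) (ne_of_gt hP),
    div_le_div_iff₀ (by positivity) (by positivity)] at hA
  have h2 : (V (t + 1) * t ^ n - (t + 1) ^ n * V t) * (t + 1) ^ 2
      ≤ 2 * ν * V (t + 1) * t ^ n :=
    le_of_mul_le_mul_right (by linear_combination hA) hQ
  -- h3 : (t+1)^n * t ≤ t^n * (t + 2ν)
  have hx0 : 0 < ν / t := by positivity
  have hx2 : ν / t ≤ 1 / 2 := by rw [div_le_iff₀ ht0]; linarith
  have e1 : (t + 1) ^ n = t ^ n * (1 + 1 / t) ^ n := by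
    rw [← mul_pow]; congr 1; field_simp
  have e2 : (1 + 1 / t) ^ n ≤ Real.exp (ν / t) := by
    have h := Real.add_one_le_exp (1 / t)
    calc (1 + 1 / t) ^ n ≤ (Real.exp (1 / t)) ^ n := by
          apply pow_le_pow_left₀ (by positivity) (by linarith)
      _ = Real.exp (ν / t) := by
          rw [← Real.exp_nat_mul]; congr 1; field_simp; exact hνdef.symm
  have e3 : Real.exp (ν / t) ≤ 1 + 2 * (ν / t) := by
    set x := ν / t with hxdef
    have h1 : (1 - x) * Real.exp x ≤ 1 := by
      have h2' := Real.add_one_le_exp (-x)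
      have h3' : (1 - x) * Real.exp x ≤ Real.exp (-x) * Real.exp x :=
        mul_le_mul_of_nonneg_right (by linarith) (Real.exp_pos x).le
      rw [← Real.exp_add] at h3'
      simpa using h3'
    nlinarith [Real.exp_pos x]
  have h3 : (t + 1) ^ n * t ≤ t ^ n * (t + 2 * ν) := by
    calc (t + 1) ^ n * t = t ^ n * (1 + 1 / t) ^ n * t := by rw [e1]
      _ ≤ t ^ n * (1 + 2 * (ν / t)) * t := by
          apply mul_le_mul_of_nonneg_right _ ht0.le
          exact mul_le_mul_of_nonneg_left (le_trans e2 e3) hP.le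
      _ = t ^ n * (t + 2 * ν) := by field_simp
  have key1 : V (t + 1) * t ^ n * t * (t + 1) ^ 2
      ≤ V t * t ^ n * (t + 2 * ν) * (t + 1) ^ 2 + 2 * ν * V (t + 1) * t ^ n * t := by
    linarith [mul_le_mul_of_nonneg_right h2 ht0.le,
      mul_le_mul_of_nonneg_right h3 (by positivity : (0:ℝ) ≤ V t * (t + 1) ^ 2)]
  have h5 : V (t + 1) * t * (t + 1) ^ 2
      ≤ V t * (t + 2 * ν) * (t + 1) ^ 2 + 2 * ν * V (t + 1) * t :=
    le_of_mul_le_mul_right (by linear_combination key1) hP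
  have h66 : 6 * ν ≤ t * t := by nlinarith [mul_le_mul ht16 ht16 (by positivity : (0:ℝ) ≤ 16 * ν) ht0.le, hν1]
  have h6 : V t * (t + 2 * ν) * (t + 1) ^ 2 ≤ V t * (t + 3 * ν) * ((t + 1) ^ 2 - 2 * ν) := by
    nlinarith [mul_nonneg (mul_nonneg ha0.le hν0.le)
      (by linarith : (0:ℝ) ≤ t * t + 1 - 6 * ν)]
  have hpos2 : (0:ℝ) < (t + 1) ^ 2 - 2 * ν := by nlinarith [h66, hν0, ht0]
  have h7 : (V (t + 1) * t) * ((t + 1) ^ 2 - 2 * ν)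
      ≤ (V t * (t + 3 * ν)) * ((t + 1) ^ 2 - 2 * ν) := by linarith [h5, h6]
  exact le_of_mul_le_mul_right h7 hpos2

/-- Analytic core of Theorem 1.1: under the volume-ratio comparison (a) and the
log-Sobolev consequence (b), a nondecreasing, eventually positive `V` with
`V → ∞` has at least linear growth. -/
theorem linear_lower_volume_growth (n : ℕ) (hn : 1 ≤ n) (C₀ c : ℝ) (hC₀ : 0 < C₀)
    (hc : Real.sqrt (2 * ((n : ℝ) + 2)) ≤ c)
    (V : ℝ → ℝ) (hVmono : Monotone V) (hVpos : ∀ r ≥ c, 0 < V r)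
    (hVinf : Filter.Tendsto V Filter.atTop Filter.atTop)
    (ha : ∀ t ≥ Real.sqrt (2 * ((n : ℝ) + 2)),
      V (t + 1) / (t + 1) ^ n - V t / t ^ n ≤ 2 * n * V (t + 1) / (t + 1) ^ (n + 2))
    (hb : ∀ t ≥ c, 0 < V (t + 2) - V (t - 1) → V (t + 2) - V (t - 1) < 1 →
      (V (t + 1) - V t) * Real.log (1 / (V (t + 2) - V (t - 1)))
        ≤ C₀ * (V (t + 2) - V (t - 1))) :
    ∃ C > (0 : ℝ), ∀ r ≥ c, C * r ≤ V r := by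
  have hν1 : (1:ℝ) ≤ (n:ℝ) := by exact_mod_cast hn
  set ν : ℝ := (n:ℝ) with hνdef
  have hν0 : (0:ℝ) < ν := by linarith
  have hc0 : 0 < c := lt_of_lt_of_le (Real.sqrt_pos.mpr (by positivity)) hc
  set B : ℝ := 36 * ν with hBdef
  have hB0 : 0 < B := by positivity
  set η : ℝ := Real.exp (-(6 * C₀)) / B with hηdef
  have hηpos : 0 < η := by positivity
  have hBη : B * η = Real.exp (-(6 * C₀)) := by
    rw [hηdef]; field_simp
  have hBη1 : B * η < 1 := by
    rw [hBη]
    calc Real.exp (-(6 * C₀)) < Real.exp 0 := Real.exp_lt_exp.mpr (by linarith)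
      _ = 1 := Real.exp_zero
  have hBη0 : 0 < B * η := by positivity
  set T₁ : ℝ := max (max c (8 * (ν + 1) ^ 2)) B with hT₁def
  have hcT₁ : c ≤ T₁ := le_trans (le_max_left _ _) (le_max_left _ _)
  have hT₁pos : 0 < T₁ := lt_of_lt_of_le hc0 hcT₁
  -- main claim: linear growth beyond T₁
  have hmain : ∀ r, T₁ ≤ r → η * r ≤ V r := by
    intro t₁ ht₁
    by_contra hcon
    push_neg at hcon
    have h8t : 8 * (ν + 1) ^ 2 ≤ t₁ := le_trans (le_trans (le_max_right _ _) (le_max_left _ _)) ht₁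
    have hBt : B ≤ t₁ := le_trans (le_max_right _ _) ht₁
    have hct₁ : c ≤ t₁ := le_trans hcT₁ ht₁
    have ht₁0 : 0 < t₁ := lt_of_lt_of_le hc0 hct₁
    set f : ℕ → ℝ := fun k => V (t₁ + k) with hfdef
    have hf0 : f 0 = V t₁ := by simp [hfdef]
    have hmono : ∀ {j k : ℕ}, j ≤ k → f j ≤ f k := by
      intro j k h
      exact hVmono (by simp only [add_le_add_iff_left, Nat.cast_le]; exact h)
    have hDnn : ∀ k : ℕ, 0 ≤ f (k + 1) - f k :=
      fun k => sub_nonneg.mpr (hmono (Nat.le_succ k))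
    -- F1 : one-step increment bound
    have hD : ∀ k : ℕ, f k ≤ f 0 + B * η → f (k + 1) ≤ f k + 6 * ν * η := by
      intro k hk
      have hk0 : (0:ℝ) ≤ (k:ℝ) := Nat.cast_nonneg k
      have hst := aux_step n c hν1 hc V hVpos ha (t₁ + (k:ℝ))
        (by linarith) (by linarith)
      have ef : f (k + 1) = V (t₁ + (k:ℝ) + 1) := by
        simp only [hfdef, Nat.cast_add, Nat.cast_one, add_assoc]
      have efk : f k = V (t₁ + (k:ℝ)) := rfl
      rw [efk] at hk
      have h2 : V (t₁ + (k:ℝ)) ≤ 2 * (η * t₁) := by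
        have hBη' : B * η ≤ t₁ * η := mul_le_mul_of_nonneg_right hBt hηpos.le
        rw [hf0] at hk
        nlinarith [hcon]
      have h3 : V (t₁ + (k:ℝ) + 1) * (t₁ + (k:ℝ))
          ≤ (V (t₁ + (k:ℝ)) + 6 * ν * η) * (t₁ + (k:ℝ)) := by
        have hm1 : 3 * ν * V (t₁ + (k:ℝ)) ≤ 3 * ν * (2 * (η * t₁)) :=
          mul_le_mul_of_nonneg_left h2 (by positivity)
        have hm2 : (0:ℝ) ≤ 6 * ν * η * (k:ℝ) := by positivity
        nlinarith [hst]
      have := le_of_mul_le_mul_right h3 (by linarith : (0:ℝ) < t₁ + (k:ℝ))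
      rw [ef, efk]
      exact this
    -- F2 : middle increment bound via (b)
    have hmid : ∀ k : ℕ, f (k + 3) ≤ f 0 + B * η →
        6 * (f (k + 2) - f (k + 1)) ≤ f (k + 3) - f k := by
      intro k hk
      have hS0 : 0 ≤ f (k + 3) - f k := sub_nonneg.mpr (hmono (by omega))
      have hD1 : 0 ≤ f (k + 2) - f (k + 1) := hDnn (k + 1)
      have hDleS : f (k + 2) - f (k + 1) ≤ f (k + 3) - f k := by
        have := hmono (show k + 2 ≤ k + 3 by omega)
        have := hmono (show k ≤ k + 1 by omega)
        linarith
      by_cases hpos : 0 < f (k + 3) - f k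
      · have hk0 : (0:ℝ) ≤ (k:ℝ) := Nat.cast_nonneg k
        set t : ℝ := t₁ + (k:ℝ) + 1 with htdef
        have htc : c ≤ t := by linarith
        have eA : V (t + 2) = f (k + 3) := by
          simp only [hfdef]; congr 1; push_cast; ring
        have eB : V (t - 1) = f k := by
          simp only [hfdef]; congr 1; ring
        have eC : V (t + 1) = f (k + 2) := by
          simp only [hfdef]; congr 1; push_cast; ring
        have eD : V t = f (k + 1) := by
          simp only [hfdef]; congr 1; push_cast; ring
        have hSle : f (k + 3) - f k ≤ B * η := by
          have h1 : f 0 ≤ f k := hmono (Nat.zero_le k)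
          linarith
        have hSlt1 : V (t + 2) - V (t - 1) < 1 := by
          rw [eA, eB]; linarith
        have hSpos : 0 < V (t + 2) - V (t - 1) := by rw [eA, eB]; exact hpos
        have hbt := hb t htc hSpos hSlt1
        rw [eA, eB, eC, eD] at hbt
        have hlog : 6 * C₀ ≤ Real.log (1 / (f (k + 3) - f k)) := by
          have h1S : 1 / (B * η) ≤ 1 / (f (k + 3) - f k) :=
            one_div_le_one_div_of_le hpos hSle
          have h2S : Real.log (1 / (B * η)) ≤ Real.log (1 / (f (k + 3) - f k)) :=
            Real.log_le_log (by positivity) h1S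
          have h3S : Real.log (1 / (B * η)) = 6 * C₀ := by
            rw [hBη, one_div, Real.log_inv, Real.log_exp]; ring
          linarith
        have hmul : 6 * C₀ * (f (k + 2) - f (k + 1))
            ≤ Real.log (1 / (f (k + 3) - f k)) * (f (k + 2) - f (k + 1)) :=
          mul_le_mul_of_nonneg_right hlog hD1
        have : C₀ * (6 * (f (k + 2) - f (k + 1))) ≤ C₀ * (f (k + 3) - f k) := by
          nlinarith [hbt, hmul]
        exact le_of_mul_le_mul_left this hC₀
      · push_neg at hpos
        linarith
    -- the key induction
    have claim : ∀ m : ℕ, f m ≤ f 0 + B * η := by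
      intro m
      induction m using Nat.strong_induction_on with
      | _ m IH =>
        match m with
        | 0 => linarith
        | 1 =>
          have h0 := hD 0 (by linarith)
          nlinarith [hηpos, hν0]
        | 2 =>
          have h0 := hD 0 (by linarith)
          have h1 := hD 1 (IH 1 (by omega))
          nlinarith [hηpos, hν0]
        | 3 =>
          have h0 := hD 0 (by linarith)
          have h1 := hD 1 (IH 1 (by omega))
          have h2 := hD 2 (IH 2 (by omega))
          nlinarith [hηpos, hν0]
        | (j + 4) =>
          set D : ℕ → ℝ := fun k => f (k + 1) - f k with hDdef
          have hsum : ∀ i : ℕ, ∑ k ∈ Finset.range i, D k = f i - f 0 :=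
            fun i => Finset.sum_range_sub f i
          have hW : f (j + 3) - f 0 ≤ B * η := by
            have := IH (j + 3) (by omega); linarith
          have hWnn : ∀ i j' : ℕ, i ≤ j' →
              ∑ k ∈ Finset.range i, D k ≤ ∑ k ∈ Finset.range j', D k := by
            intro i j' h
            exact Finset.sum_le_sum_of_subset_of_nonneg
              (Finset.range_subset_range.mpr h) (fun x _ _ => hDnn x)
          -- bound the three shifted sums by the full sum over range (j+3)
          have hs1 : ∑ k ∈ Finset.range (j + 1), D k ≤ f (j + 3) - f 0 := by
            rw [← hsum (j + 3)]; exact hWnn _ _ (by omega)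
          have e2 : ∑ k ∈ Finset.range (j + 2), D k
              = (∑ k ∈ Finset.range (j + 1), D (k + 1)) + D 0 :=
            Finset.sum_range_succ' D (j + 1)
          have hd0 : (0:ℝ) ≤ D 0 := hDnn 0
          have hd1 : (0:ℝ) ≤ D (0 + 1) := hDnn 1
          have hs2 : ∑ k ∈ Finset.range (j + 1), D (k + 1) ≤ f (j + 3) - f 0 := by
            have h1 := hWnn (j + 2) (j + 3) (by omega)
            rw [e2] at h1
            rw [← hsum (j + 3)]
            linarith
          have e3 : ∑ k ∈ Finset.range (j + 2), D (k + 1)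
              = (∑ k ∈ Finset.range (j + 1), D (k + 1 + 1)) + D (0 + 1) :=
            Finset.sum_range_succ' (fun k => D (k + 1)) (j + 1)
          have e4 : ∑ k ∈ Finset.range (j + 3), D k
              = (∑ k ∈ Finset.range (j + 2), D (k + 1)) + D 0 :=
            Finset.sum_range_succ' D (j + 2)
          have hs3 : ∑ k ∈ Finset.range (j + 1), D (k + 2) ≤ f (j + 3) - f 0 := by
            have hsum3 := hsum (j + 3)
            rw [e4, e3] at hsum3
            have heq : ∑ k ∈ Finset.range (j + 1), D (k + 2)
                = ∑ k ∈ Finset.range (j + 1), D (k + 1 + 1) := rfl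
            rw [heq]
            linarith
          -- middle bound via hmid
          have hmid' : ∀ k ∈ Finset.range (j + 1),
              6 * D (k + 1) ≤ D k + D (k + 1) + D (k + 2) := by
            intro k hkmem
            have hkle : k + 3 < j + 4 := by
              simp only [Finset.mem_range] at hkmem; omega
            have h1 := hmid k (IH (k + 3) hkle)
            simp only [hDdef]
            linarith
          have hmidsum : 6 * ∑ k ∈ Finset.range (j + 1), D (k + 1)
              ≤ 3 * (f (j + 3) - f 0) := by
            have h1 : ∑ k ∈ Finset.range (j + 1), (6 * D (k + 1))
                ≤ ∑ k ∈ Finset.range (j + 1), (D k + D (k + 1) + D (k + 2)) :=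
              Finset.sum_le_sum hmid'
            rw [← Finset.mul_sum] at h1
            have h2 : ∑ k ∈ Finset.range (j + 1), (D k + D (k + 1) + D (k + 2))
                = (∑ k ∈ Finset.range (j + 1), D k)
                  + (∑ k ∈ Finset.range (j + 1), D (k + 1))
                  + (∑ k ∈ Finset.range (j + 1), D (k + 2)) := by
              rw [← Finset.sum_add_distrib, ← Finset.sum_add_distrib]
            rw [h2] at h1
            linarith
          -- assemble
          have ha1 : ∑ k ∈ Finset.range (j + 4), D k
              = ∑ k ∈ Finset.range (j + 2), D k + D (j + 2) + D (j + 3) := by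
            rw [Finset.sum_range_succ, Finset.sum_range_succ]
          have hd0 : D 0 ≤ 6 * ν * η := by
            have := hD 0 (by linarith); simp only [hDdef]; linarith
          have hdj2 : D (j + 2) ≤ 6 * ν * η := by
            have := hD (j + 2) (IH (j + 2) (by omega)); simp only [hDdef]; linarith
          have hdj3 : D (j + 3) ≤ 6 * ν * η := by
            have := hD (j + 3) (IH (j + 3) (by omega)); simp only [hDdef]; linarith
          have htot : f (j + 4) - f 0 ≤ 6 * ν * η + (1/2) * (B * η) + 6 * ν * η + 6 * ν * η := by
            have h1 := hsum (j + 4)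
            rw [ha1, e2] at h1
            have hm2 : ∑ k ∈ Finset.range (j + 1), D (k + 1) ≤ (1/2) * (f (j + 3) - f 0) := by
              linarith
            nlinarith [hW, hBη0]
          have hfin : 6 * ν * η + (1/2) * (B * η) + 6 * ν * η + 6 * ν * η = B * η := by
            rw [hBdef]; ring
          linarith
    -- contradiction with V → ∞
    obtain ⟨s, hs1, hs2⟩ := ((hVinf.eventually_gt_atTop (f 0 + B * η)).and
      (Filter.eventually_ge_atTop t₁)).exists
    obtain ⟨m, hm⟩ := exists_nat_ge (s - t₁)
    have h1 : V s ≤ f m := hVmono (by linarith : s ≤ t₁ + (m:ℝ))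
    exact absurd (h1.trans (claim m)) (not_le.mpr hs1)
  -- assemble the final constant
  have hVc : 0 < V c := hVpos c le_rfl
  refine ⟨min η (V c / T₁), lt_min hηpos (div_pos hVc hT₁pos), ?_⟩
  intro r hr
  have hr0 : 0 ≤ r := le_trans hc0.le hr
  rcases le_total T₁ r with h | h
  · calc min η (V c / T₁) * r ≤ η * r := mul_le_mul_of_nonneg_right (min_le_left _ _) hr0
      _ ≤ V r := hmain r h
  · calc min η (V c / T₁) * r ≤ (V c / T₁) * r :=
        mul_le_mul_of_nonneg_right (min_le_right _ _) hr0
      _ ≤ (V c / T₁) * T₁ := mul_le_mul_of_nonneg_left h (by positivity)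
      _ = V c := div_mul_cancel₀ _ hT₁pos.ne'
      _ ≤ V r := hVmono hr
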